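/- Anchored string-sum bound with minimal-distance weight. Suppose additionally that |{i' ∈ Λ : d(i,i') = s}| ≤ γ s^{D−1} for every i ∈ Λ and integer s ≥ 1, with γ ≥ 1. Then for every integer m₁ ≥ 0 and all sites i, i₁ ∈ Λ, Σ_{(Z₀,…,Z_{m₁}) connected, Z₀ ∋ i₁} [ ∏_{j=0}^{m₁} a_{Z_j} ] / ( min_{i'∈ Z₀∪⋯∪Z_{m₁}} d(i,i') + 1 )^{α} ≤ c₂ · m₁! (m₁+1)² g̃^{m₁+1} (d(i,i₁)+1)^{−α}, where c₂ := 2^{α} (2 + γ/(α−D)). -/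

import Mathlib

open scoped Classical ENNReal Matrix ComplexOrder
open Complex

noncomputable section

/-- Spin configurations of a lattice `Λ` of (1/2)-spins. -/
abbrev SpinConf (Λ : Type) := Λ → Fin 2

/-- Operators on the Hilbert space `⨂_{i∈Λ} ℂ²`, realized as complex matrices
indexed by spin configurations. -/
abbrev SpinOp (Λ : Type) [Fintype Λ] [DecidableEq Λ] := Matrix (SpinConf Λ) (SpinConf Λ) ℂ

section GeneralMatrices

variable {n : Type} [Fintype n] [DecidableEq n]

/-- The operator norm `‖·‖` (largest singular value). -/
noncomputable def opNorm (A : Matrix n n ℂ) : ℝ :=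
  ‖Matrix.toEuclideanCLM (𝕜 := ℂ) A‖

/-- The normalized Frobenius norm `‖O‖_F := √(tr(O†O)/tr(1̂))`. -/
noncomputable def frobNorm (A : Matrix n n ℂ) : ℝ :=
  Real.sqrt ((Aᴴ * A).trace.re / (Fintype.card n))

/-- The Schatten `p`-norm; for `p = ∞` it is the operator norm, otherwise it is the
`ℓ^p` norm of the singular values. -/
noncomputable def schattenNorm (p : ℝ≥0∞) (A : Matrix n n ℂ) : ℝ :=
  if p = ⊤ then opNorm A
  else (∑ i, Real.sqrt ((Matrix.posSemidef_conjTranspose_mul_self A).1.eigenvalues i)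
      ^ p.toReal) ^ (1 / p.toReal)

/-- The commutator `[A,B] := AB - BA`. -/
def commM (A B : Matrix n n ℂ) : Matrix n n ℂ := A * B - B * A

/-- `U` is a unitary matrix. -/
def IsUnitaryM (U : Matrix n n ℂ) : Prop := Uᴴ * U = 1 ∧ U * Uᴴ = 1

/-- Heisenberg time evolution `O(t) := e^{iHt} O e^{-iHt}`. -/
noncomputable def timeEv (H : Matrix n n ℂ) (t : ℝ) (A : Matrix n n ℂ) : Matrix n n ℂ :=
  NormedSpace.exp ((Complex.I * (t : ℂ)) • H) * A *
    NormedSpace.exp ((-(Complex.I * (t : ℂ))) • H)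

end GeneralMatrices

variable {Λ : Type} [Fintype Λ] [DecidableEq Λ]

/-- `A = A_X ⊗ 1_{X^c}`: the matrix entries vanish unless the configurations agree
outside `X`, and depend only on the configurations inside `X`. -/
def IsSupportedOn (A : SpinOp Λ) (X : Finset Λ) : Prop :=
  (∀ a b : SpinConf Λ, (∃ i ∉ X, a i ≠ b i) → A a b = 0) ∧
  (∀ a b a' b' : SpinConf Λ, (∀ i ∈ X, a i = a' i) → (∀ i ∈ X, b i = b' i) →
    (∀ i ∉ X, a i = b i) → (∀ i ∉ X, a' i = b' i) → A a b = A a' b')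

/-- The localization `(tr_{X^c}[A]/tr_{X^c}(1̂)) ⊗ 1_{X^c}` of an operator `A`
onto the subset `X` (normalized partial trace over `X^c` tensored with identity). -/
noncomputable def localize (A : SpinOp Λ) (X : Finset Λ) : SpinOp Λ := fun a b =>
  (if ∀ i ∉ X, a i = b i then (1 : ℂ) else 0) *
    (∑ c : SpinConf Λ,
      A (fun i => if i ∈ X then a i else c i) (fun i => if i ∈ X then b i else c i))
    / (2 ^ Fintype.card Λ)

/-- `d` is a metric taking nonnegative integer values. -/
def IsLatticeMetric (d : Λ → Λ → ℕ) : Prop :=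
  (∀ i j, d i j = d j i) ∧ (∀ i j, d i j = 0 ↔ i = j) ∧
    (∀ i j l, d i l ≤ d i j + d j l)

/-- The ball `i[r] := {j : d(i,j) ≤ r}`. -/
def ball (d : Λ → Λ → ℕ) (i : Λ) (r : ℕ) : Finset Λ :=
  Finset.univ.filter (fun j => d i j ≤ r)

/-- The extended set `X[r] := ⋃_{i∈X} i[r]`. -/
def extend (d : Λ → Λ → ℕ) (X : Finset Λ) (r : ℕ) : Finset Λ :=
  Finset.univ.filter (fun j => ∃ i ∈ X, d i j ≤ r)

/-- The distance from a site to a (nonempty) finite set of sites. -/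
noncomputable def distSet (d : Λ → Λ → ℕ) (i : Λ) (S : Finset Λ) : ℕ :=
  sInf {m : ℕ | ∃ j ∈ S, d i j = m}

/-- The inner boundary `∂X := {i ∈ X : d(i,X^c) = 1}`. -/
noncomputable def bdry (d : Λ → Λ → ℕ) (X : Finset Λ) : Finset Λ :=
  X.filter (fun i => distSet d i Xᶜ = 1)

/-- The layer `(∂X)_s`: the sites of `X` at distance `-s` from `∂X` when `s ≤ 0`,
and the sites of `X^c` at distance `s` from `∂X` when `s > 0`. -/
noncomputable def layer (d : Λ → Λ → ℕ) (X : Finset Λ) (s : ℤ) : Finset Λ :=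
  if s ≤ 0 then X.filter (fun i => (distSet d i (bdry d X) : ℤ) = -s)
  else Xᶜ.filter (fun i => (distSet d i (bdry d X) : ℤ) = s)

/-- The four single-site Pauli matrices `σ⁰ = 1, σˣ, σʸ, σᶻ`. -/
def pauli : Fin 4 → Matrix (Fin 2) (Fin 2) ℂ :=
  ![1, !![0, 1; 1, 0], !![0, -Complex.I; Complex.I, 0], !![1, 0; 0, -1]]

/-- A Pauli string `⨂_{i∈Λ} σ^{p(i)}`. -/
noncomputable def pauliString (p : Λ → Fin 4) : SpinOp Λ :=
  fun a b => ∏ i, pauli (p i) (a i) (b i)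

/-- The Pauli expansion coefficient `tr(P_p A)/2^{|Λ|}` of `A` at the string `p`. -/
noncomputable def pauliCoeff (A : SpinOp Λ) (p : Λ → Fin 4) : ℂ :=
  (pauliString p * A).trace / (2 ^ Fintype.card Λ)

/-- `J := 3^{k/2} J₀`. -/
noncomputable def Jconst (k : ℕ) (J₀ : ℝ) : ℝ := Real.sqrt 3 ^ k * J₀

/-- `g̃ := max(gk, λJ)` with `J = 3^{k/2} J₀`. -/
noncomputable def gTilde (k : ℕ) (J₀ g lam : ℝ) : ℝ := max (g * k) (lam * Jconst k J₀)

/-- `C₀ := 2^{α-D/2+2} J₀ γ/(2α-D-1) + (80 g̃ γ 2^{α-D/2}/(α-D)) √(2α-2D+γ)`. -/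
noncomputable def C0 (α J₀ γ : ℝ) (D : ℕ) (gt : ℝ) : ℝ :=
  (2 : ℝ) ^ (α - (D : ℝ) / 2 + 2) * J₀ * γ / (2 * α - (D : ℝ) - 1) +
    (80 * gt * γ * (2 : ℝ) ^ (α - (D : ℝ) / 2) / (α - (D : ℝ))) *
      Real.sqrt (2 * α - 2 * (D : ℝ) + γ)

end

/-- A sequence `(Z₀,…,Z_m)` of subsets is connected if each `Z_j` (`j ≥ 1`)
intersects `Z₀ ∪ ⋯ ∪ Z_{j-1}`. -/
def SeqConnected {Λ : Type} [Fintype Λ] [DecidableEq Λ] {m : ℕ}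
    (w : Fin (m + 1) → Finset Λ) : Prop :=
  ∀ j : Fin (m + 1), 0 < (j : ℕ) →
    (w j ∩ (Finset.univ.filter
      (fun j' : Fin (m + 1) => (j' : ℕ) < (j : ℕ))).biUnion w).Nonempty

section AnchoredAux

variable {Λ : Type} [Fintype Λ] [DecidableEq Λ]

lemma aux_sum_biUnion_le {ι β : Type*} [DecidableEq β] (s : Finset ι) (t : ι → Finset β)
    (f : β → ℝ) (hf : ∀ b, 0 ≤ f b) :
    ∑ b ∈ s.biUnion t, f b ≤ ∑ i ∈ s, ∑ b ∈ t i, f b := by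
  induction s using Finset.induction_on with
  | empty => simp
  | insert i s hi ih =>
    rw [Finset.biUnion_insert, Finset.sum_insert hi]
    have h1 := Finset.sum_union_inter (s₁ := t i) (s₂ := s.biUnion t) (f := f)
    have h2 : 0 ≤ ∑ b ∈ t i ∩ s.biUnion t, f b := Finset.sum_nonneg fun b _ => hf b
    linarith

lemma aux_snoc_zero (m : ℕ) (p : Fin (m + 1) → Finset Λ) (Z : Finset Λ) :
    (Fin.snoc p Z : Fin (m + 2) → Finset Λ) 0 = p 0 := by
  have h : ((0 : Fin (m + 1)).castSucc) = (0 : Fin (m + 2)) := rfl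
  rw [← h, Fin.snoc_castSucc]

lemma aux_biUnion_snoc (m : ℕ) (p : Fin (m + 1) → Finset Λ) (Z : Finset Λ) :
    Finset.univ.biUnion (Fin.snoc p Z : Fin (m + 2) → Finset Λ)
      = Finset.univ.biUnion p ∪ Z := by
  ext x
  simp only [Finset.mem_biUnion, Finset.mem_union, Finset.mem_univ, true_and]
  constructor
  · rintro ⟨j, hj⟩
    induction j using Fin.lastCases with
    | last => right; simpa [Fin.snoc_last] using hj
    | cast j₀ => left; exact ⟨j₀, by simpa [Fin.snoc_castSucc] using hj⟩
  · rintro (⟨j₀, hj⟩ | hz)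
    · exact ⟨j₀.castSucc, by simpa [Fin.snoc_castSucc] using hj⟩
    · exact ⟨Fin.last _, by simpa [Fin.snoc_last] using hz⟩

lemma aux_biUnion_snoc_lt (m n : ℕ) (hn : n ≤ m + 1) (p : Fin (m + 1) → Finset Λ)
    (Z : Finset Λ) :
    (Finset.univ.filter (fun j' : Fin (m + 2) => (j' : ℕ) < n)).biUnion
        (Fin.snoc p Z : Fin (m + 2) → Finset Λ)
      = (Finset.univ.filter (fun j' : Fin (m + 1) => (j' : ℕ) < n)).biUnion p := by
  ext x
  simp only [Finset.mem_biUnion, Finset.mem_filter, Finset.mem_univ, true_and]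
  constructor
  · rintro ⟨j, hj, hx⟩
    have hj' : (j : ℕ) < m + 1 := lt_of_lt_of_le hj hn
    refine ⟨⟨(j : ℕ), hj'⟩, hj, ?_⟩
    have h : ((⟨(j : ℕ), hj'⟩ : Fin (m + 1)).castSucc) = j := by ext; simp
    rw [← h, Fin.snoc_castSucc] at hx
    exact hx
  · rintro ⟨j₀, hj, hx⟩
    exact ⟨j₀.castSucc, by simpa using hj, by simpa [Fin.snoc_castSucc] using hx⟩

lemma aux_seqConnected_snoc (m : ℕ) (p : Fin (m + 1) → Finset Λ) (Z : Finset Λ) :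
    SeqConnected (Fin.snoc p Z : Fin (m + 2) → Finset Λ) ↔
      SeqConnected p ∧ (Z ∩ Finset.univ.biUnion p).Nonempty := by
  constructor
  · intro h
    constructor
    · intro j₀ hj₀
      have h2 := h j₀.castSucc (by simpa using hj₀)
      rw [Fin.snoc_castSucc] at h2
      rw [show ((j₀.castSucc : Fin (m+2)) : ℕ) = (j₀ : ℕ) from rfl,
        aux_biUnion_snoc_lt m (j₀ : ℕ) (le_of_lt j₀.isLt) p Z] at h2
      exact h2
    · have h2 := h (Fin.last (m + 1)) (by simp)
      rw [Fin.snoc_last] at h2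
      rw [show ((Fin.last (m+1) : Fin (m+2)) : ℕ) = m + 1 from rfl,
        aux_biUnion_snoc_lt m (m + 1) le_rfl p Z,
        Finset.filter_true_of_mem (fun j _ => j.isLt)] at h2
      exact h2
  · rintro ⟨hc, hz⟩ j hj
    induction j using Fin.lastCases with
    | last =>
      rw [Fin.snoc_last,
        show ((Fin.last (m+1) : Fin (m+2)) : ℕ) = m + 1 from rfl,
        aux_biUnion_snoc_lt m (m + 1) le_rfl p Z,
        Finset.filter_true_of_mem (fun j _ => j.isLt)]
      exact hz
    | cast j₀ =>
      rw [Fin.snoc_castSucc,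
        show ((j₀.castSucc : Fin (m+2)) : ℕ) = (j₀ : ℕ) from rfl,
        aux_biUnion_snoc_lt m (j₀ : ℕ) (le_of_lt j₀.isLt) p Z]
      exact hc j₀ (by simpa using hj)

end AnchoredAux

section AnchoredMain

variable {Λ : Type} [Fintype Λ] [DecidableEq Λ]

private def auxSnocEquiv (m : ℕ) : ((Fin (m + 1) → Finset Λ) × Finset Λ) ≃ (Fin (m + 2) → Finset Λ) where
  toFun pz := Fin.snoc pz.1 pz.2
  invFun w := (Fin.init w, w (Fin.last (m + 1)))
  left_inv := fun pz => by simp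
  right_inv := fun w => Fin.snoc_init_self w

lemma aux_ite_nonneg (P : Prop) [Decidable P] {c : ℝ} (hc : 0 ≤ c) :
    0 ≤ if P then c else 0 := by
  split_ifs <;> simp [hc]

lemma aux_sum_meet_le (a : Finset Λ → ℝ) (ha : ∀ Z, 0 ≤ a Z) (g : ℝ)
    (hsite : ∀ i : Λ, ∑ Z ∈ Finset.univ.filter (fun Z : Finset Λ => i ∈ Z), a Z ≤ g)
    (U : Finset Λ) :
    ∑ Z ∈ Finset.univ.filter (fun Z : Finset Λ => (Z ∩ U).Nonempty), a Z
      ≤ (U.card : ℝ) * g := by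
  have hsub : Finset.univ.filter (fun Z : Finset Λ => (Z ∩ U).Nonempty)
      ⊆ U.biUnion (fun v => Finset.univ.filter (fun Z : Finset Λ => v ∈ Z)) := by
    intro Z hZ
    simp only [Finset.mem_filter, Finset.mem_univ, true_and] at hZ
    obtain ⟨v, hv⟩ := hZ
    rw [Finset.mem_inter] at hv
    exact Finset.mem_biUnion.2 ⟨v, hv.2, by simp [hv.1]⟩
  calc ∑ Z ∈ Finset.univ.filter (fun Z : Finset Λ => (Z ∩ U).Nonempty), a Z
      ≤ ∑ Z ∈ U.biUnion (fun v => Finset.univ.filter (fun Z : Finset Λ => v ∈ Z)), a Z :=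
        Finset.sum_le_sum_of_subset_of_nonneg hsub (fun Z _ _ => ha Z)
    _ ≤ ∑ v ∈ U, ∑ Z ∈ Finset.univ.filter (fun Z : Finset Λ => v ∈ Z), a Z :=
        aux_sum_biUnion_le U _ a ha
    _ ≤ ∑ v ∈ U, g := Finset.sum_le_sum fun v _ => hsite v
    _ = (U.card : ℝ) * g := by rw [Finset.sum_const, nsmul_eq_mul]

lemma aux_sum_bridge_le (d : Λ → Λ → ℕ) (α J : ℝ)
    (a : Finset Λ → ℝ) (ha : ∀ Z, 0 ≤ a Z)
    (hpair : ∀ i i' : Λ,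
      ∑ Z ∈ Finset.univ.filter (fun Z : Finset Λ => i ∈ Z ∧ i' ∈ Z), a Z
        ≤ J * ((d i i' : ℝ) + 1) ^ (-α))
    (U : Finset Λ) (y : Λ) :
    ∑ Z ∈ Finset.univ.filter (fun Z : Finset Λ => (Z ∩ U).Nonempty ∧ y ∈ Z), a Z
      ≤ ∑ v ∈ U, J * ((d v y : ℝ) + 1) ^ (-α) := by
  have hsub : Finset.univ.filter (fun Z : Finset Λ => (Z ∩ U).Nonempty ∧ y ∈ Z)
      ⊆ U.biUnion (fun v => Finset.univ.filter (fun Z : Finset Λ => v ∈ Z ∧ y ∈ Z)) := by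
    intro Z hZ
    simp only [Finset.mem_filter, Finset.mem_univ, true_and] at hZ
    obtain ⟨⟨v, hv⟩, hy⟩ := hZ
    rw [Finset.mem_inter] at hv
    exact Finset.mem_biUnion.2 ⟨v, hv.2, by simp [hv.1, hy]⟩
  calc ∑ Z ∈ Finset.univ.filter (fun Z : Finset Λ => (Z ∩ U).Nonempty ∧ y ∈ Z), a Z
      ≤ ∑ Z ∈ U.biUnion (fun v => Finset.univ.filter (fun Z : Finset Λ => v ∈ Z ∧ y ∈ Z)), a Z :=
        Finset.sum_le_sum_of_subset_of_nonneg hsub (fun Z _ _ => ha Z)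
    _ ≤ ∑ v ∈ U, ∑ Z ∈ Finset.univ.filter (fun Z : Finset Λ => v ∈ Z ∧ y ∈ Z), a Z :=
        aux_sum_biUnion_le U _ a ha
    _ ≤ ∑ v ∈ U, J * ((d v y : ℝ) + 1) ^ (-α) := Finset.sum_le_sum fun v _ => hpair v y

/-- The two-point anchored string sum. -/
noncomputable def strS (a : Finset Λ → ℝ) (k m : ℕ) (x y : Λ) : ℝ :=
  ∑ w ∈ Finset.univ.filter (fun w : Fin (m + 1) → Finset Λ =>
      (∀ j, (w j).Nonempty ∧ (w j).card ≤ k) ∧ SeqConnected w ∧ x ∈ w 0 ∧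
        y ∈ Finset.univ.biUnion w),
    ∏ j, a (w j)

lemma strS_le (d : Λ → Λ → ℕ) (k : ℕ) (α J g lam : ℝ)
    (hJ : 0 < J) (hg : 0 ≤ g) (hlam : 1 ≤ lam)
    (a : Finset Λ → ℝ) (ha : ∀ Z, 0 ≤ a Z)
    (hpair : ∀ i i' : Λ,
      ∑ Z ∈ Finset.univ.filter (fun Z : Finset Λ => i ∈ Z ∧ i' ∈ Z), a Z
        ≤ J * ((d i i' : ℝ) + 1) ^ (-α))
    (hsite : ∀ i : Λ,
      ∑ Z ∈ Finset.univ.filter (fun Z : Finset Λ => i ∈ Z), a Z ≤ g)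
    (hlam₂ : ∀ i i' : Λ,
      ∑ i₀ : Λ, ((d i i₀ : ℝ) + 1) ^ (-α) * ((d i₀ i' : ℝ) + 1) ^ (-α)
        ≤ lam * ((d i i' : ℝ) + 1) ^ (-α)) :
    ∀ (m : ℕ) (x y : Λ), strS a k m x y
      ≤ ((m + 1).factorial : ℝ) * max (g * k) (lam * J) ^ m * J * ((d x y : ℝ) + 1) ^ (-α) := by
  have hGJ : lam * J ≤ max (g * (k : ℝ)) (lam * J) := le_max_right _ _
  have hGk : g * (k : ℝ) ≤ max (g * (k : ℝ)) (lam * J) := le_max_left _ _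
  have hG0 : 0 < max (g * (k : ℝ)) (lam * J) := lt_of_lt_of_le (by nlinarith) hGJ
  have hprodnn : ∀ {n : ℕ} (p : Fin n → Finset Λ), 0 ≤ ∏ j, a (p j) :=
    fun p => Finset.prod_nonneg fun j _ => ha (p j)
  intro m
  induction m with
  | zero =>
    intro x y
    have h1 : strS a k 0 x y ≤ ∑ Z ∈ Finset.univ.filter (fun Z : Finset Λ => x ∈ Z ∧ y ∈ Z), a Z := by
      simp only [strS]
      have hrw : ∀ w ∈ Finset.univ.filter (fun w : Fin 1 → Finset Λ =>
          (∀ j, (w j).Nonempty ∧ (w j).card ≤ k) ∧ SeqConnected w ∧ x ∈ w 0 ∧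
            y ∈ Finset.univ.biUnion w), (∏ j, a (w j)) = a (w 0) :=
        fun w _ => Fin.prod_univ_one _
      rw [Finset.sum_congr rfl hrw]
      have hinj : ∀ w ∈ Finset.univ.filter (fun w : Fin 1 → Finset Λ =>
          (∀ j, (w j).Nonempty ∧ (w j).card ≤ k) ∧ SeqConnected w ∧ x ∈ w 0 ∧
            y ∈ Finset.univ.biUnion w), ∀ w' ∈ Finset.univ.filter (fun w : Fin 1 → Finset Λ =>
          (∀ j, (w j).Nonempty ∧ (w j).card ≤ k) ∧ SeqConnected w ∧ x ∈ w 0 ∧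
            y ∈ Finset.univ.biUnion w), w 0 = w' 0 → w = w' := by
        intro w _ w' _ h
        funext j
        rw [Subsingleton.elim j 0]
        exact h
      rw [← Finset.sum_image hinj]
      apply Finset.sum_le_sum_of_subset_of_nonneg
      · intro Z hZ
        simp only [Finset.mem_image, Finset.mem_filter, Finset.mem_univ, true_and] at hZ ⊢
        obtain ⟨w, ⟨_, _, hx0, hy⟩, rfl⟩ := hZ
        refine ⟨hx0, ?_⟩
        rw [Finset.mem_biUnion] at hy
        obtain ⟨j, _, hj⟩ := hy
        rwa [Subsingleton.elim j 0] at hj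
      · exact fun Z _ _ => ha Z
    refine le_trans (h1.trans (hpair x y)) ?_
    norm_num
  | succ m ih =>
    intro x y
    set G := max (g * (k : ℝ)) (lam * J) with hGdef
    set X := ((d x y : ℝ) + 1) ^ (-α) with hXdef
    have hXnn : 0 ≤ X := Real.rpow_nonneg (by positivity) _
    -- Step 1: decompose the sum along `Fin.snoc`
    have hstep1 : strS a k (m + 1) x y = ∑ p : Fin (m + 1) → Finset Λ, ∑ Z : Finset Λ,
        (if ((∀ j, ((Fin.snoc p Z : Fin (m + 2) → Finset Λ) j).Nonempty ∧
              ((Fin.snoc p Z : Fin (m + 2) → Finset Λ) j).card ≤ k) ∧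
            SeqConnected (Fin.snoc p Z : Fin (m + 2) → Finset Λ) ∧
            x ∈ (Fin.snoc p Z : Fin (m + 2) → Finset Λ) 0 ∧
            y ∈ Finset.univ.biUnion (Fin.snoc p Z : Fin (m + 2) → Finset Λ))
          then (∏ j, a (p j)) * a Z else 0) := by
      simp only [strS]
      rw [Finset.sum_filter]
      rw [← Equiv.sum_comp (auxSnocEquiv (Λ := Λ) m)
        (fun w : Fin (m + 2) → Finset Λ =>
          if ((∀ j, (w j).Nonempty ∧ (w j).card ≤ k) ∧ SeqConnected w ∧ x ∈ w 0 ∧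
              y ∈ Finset.univ.biUnion w) then ∏ j, a (w j) else 0)]
      rw [Fintype.sum_prod_type]
      refine Finset.sum_congr rfl fun p _ => Finset.sum_congr rfl fun Z _ => ?_
      have he : (auxSnocEquiv (Λ := Λ) m) (p, Z) = (Fin.snoc p Z : Fin (m + 2) → Finset Λ) := rfl
      rw [he]
      have hprod : ∏ j : Fin (m + 2), a ((Fin.snoc p Z : Fin (m + 2) → Finset Λ) j)
          = (∏ j, a (p j)) * a Z := by
        rw [Fin.prod_univ_castSucc]
        simp [Fin.snoc_castSucc, Fin.snoc_last]
      rw [hprod]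
    -- termwise bound splitting into two contributions
    have hkey : ∀ (p : Fin (m + 1) → Finset Λ) (Z : Finset Λ),
        (if ((∀ j, ((Fin.snoc p Z : Fin (m + 2) → Finset Λ) j).Nonempty ∧
              ((Fin.snoc p Z : Fin (m + 2) → Finset Λ) j).card ≤ k) ∧
            SeqConnected (Fin.snoc p Z : Fin (m + 2) → Finset Λ) ∧
            x ∈ (Fin.snoc p Z : Fin (m + 2) → Finset Λ) 0 ∧
            y ∈ Finset.univ.biUnion (Fin.snoc p Z : Fin (m + 2) → Finset Λ))
          then (∏ j, a (p j)) * a Z else 0)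
        ≤ (if ((∀ j, (p j).Nonempty ∧ (p j).card ≤ k) ∧ SeqConnected p ∧ x ∈ p 0 ∧
              y ∈ Finset.univ.biUnion p) then ∏ j, a (p j) else 0)
            * (if (Z ∩ Finset.univ.biUnion p).Nonempty then a Z else 0)
          + (if ((∀ j, (p j).Nonempty ∧ (p j).card ≤ k) ∧ SeqConnected p ∧ x ∈ p 0)
              then ∏ j, a (p j) else 0)
            * (if ((Z ∩ Finset.univ.biUnion p).Nonempty ∧ y ∈ Z) then a Z else 0) := by
      intro p Z
      by_cases h : ((∀ j, ((Fin.snoc p Z : Fin (m + 2) → Finset Λ) j).Nonempty ∧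
              ((Fin.snoc p Z : Fin (m + 2) → Finset Λ) j).card ≤ k) ∧
            SeqConnected (Fin.snoc p Z : Fin (m + 2) → Finset Λ) ∧
            x ∈ (Fin.snoc p Z : Fin (m + 2) → Finset Λ) 0 ∧
            y ∈ Finset.univ.biUnion (Fin.snoc p Z : Fin (m + 2) → Finset Λ))
      · rw [if_pos h]
        obtain ⟨hval, hconn, hx0, hy⟩ := h
        have hvalp : ∀ j, (p j).Nonempty ∧ (p j).card ≤ k := fun j => by
          have h2 := hval j.castSucc
          rwa [Fin.snoc_castSucc] at h2
        rw [aux_seqConnected_snoc] at hconn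
        rw [aux_snoc_zero] at hx0
        rw [aux_biUnion_snoc, Finset.mem_union] at hy
        rcases hy with hyU | hyZ
        · rw [if_pos (⟨hvalp, hconn.1, hx0, hyU⟩ :
              (∀ j, (p j).Nonempty ∧ (p j).card ≤ k) ∧ SeqConnected p ∧ x ∈ p 0 ∧
                y ∈ Finset.univ.biUnion p), if_pos hconn.2]
          exact le_add_of_nonneg_right (mul_nonneg
            (aux_ite_nonneg _ (hprodnn p)) (aux_ite_nonneg _ (ha Z)))
        · rw [if_pos (⟨hvalp, hconn.1, hx0⟩ :
              (∀ j, (p j).Nonempty ∧ (p j).card ≤ k) ∧ SeqConnected p ∧ x ∈ p 0),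
            if_pos (⟨hconn.2, hyZ⟩ : (Z ∩ Finset.univ.biUnion p).Nonempty ∧ y ∈ Z)]
          exact le_add_of_nonneg_left (mul_nonneg
            (aux_ite_nonneg _ (hprodnn p)) (aux_ite_nonneg _ (ha Z)))
      · rw [if_neg h]
        exact add_nonneg
          (mul_nonneg (aux_ite_nonneg _ (hprodnn p)) (aux_ite_nonneg _ (ha Z)))
          (mul_nonneg (aux_ite_nonneg _ (hprodnn p)) (aux_ite_nonneg _ (ha Z)))
    -- part A bound
    have hpartA : ∑ p : Fin (m + 1) → Finset Λ,
        (if ((∀ j, (p j).Nonempty ∧ (p j).card ≤ k) ∧ SeqConnected p ∧ x ∈ p 0 ∧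
            y ∈ Finset.univ.biUnion p) then ∏ j, a (p j) else 0)
          * (∑ Z : Finset Λ, if (Z ∩ Finset.univ.biUnion p).Nonempty then a Z else 0)
        ≤ strS a k m x y * (((m : ℝ) + 1) * G) := by
      have h1 : ∀ p : Fin (m + 1) → Finset Λ,
          (if ((∀ j, (p j).Nonempty ∧ (p j).card ≤ k) ∧ SeqConnected p ∧ x ∈ p 0 ∧
              y ∈ Finset.univ.biUnion p) then ∏ j, a (p j) else 0)
            * (∑ Z : Finset Λ, if (Z ∩ Finset.univ.biUnion p).Nonempty then a Z else 0)
          ≤ (if ((∀ j, (p j).Nonempty ∧ (p j).card ≤ k) ∧ SeqConnected p ∧ x ∈ p 0 ∧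
              y ∈ Finset.univ.biUnion p) then ∏ j, a (p j) else 0) * (((m : ℝ) + 1) * G) := by
        intro p
        by_cases hp : ((∀ j, (p j).Nonempty ∧ (p j).card ≤ k) ∧ SeqConnected p ∧ x ∈ p 0 ∧
            y ∈ Finset.univ.biUnion p)
        · rw [if_pos hp]
          apply mul_le_mul_of_nonneg_left _ (hprodnn p)
          have hc : ((Finset.univ.biUnion p).card : ℝ) ≤ ((m : ℝ) + 1) * k := by
            have h2 : (Finset.univ.biUnion p).card ≤ ∑ j : Fin (m + 1), (p j).card :=
              Finset.card_biUnion_le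
            have h3 : ∑ j : Fin (m + 1), (p j).card ≤ (m + 1) * k := by
              calc ∑ j : Fin (m + 1), (p j).card ≤ ∑ _j : Fin (m + 1), k :=
                    Finset.sum_le_sum fun j _ => (hp.1 j).2
                _ = (m + 1) * k := by simp [Finset.sum_const, mul_comm]
            have := le_trans h2 h3
            exact_mod_cast this
          calc ∑ Z : Finset Λ, (if (Z ∩ Finset.univ.biUnion p).Nonempty then a Z else 0)
              = ∑ Z ∈ Finset.univ.filter
                  (fun Z : Finset Λ => (Z ∩ Finset.univ.biUnion p).Nonempty), a Z :=
                (Finset.sum_filter _ _).symm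
            _ ≤ ((Finset.univ.biUnion p).card : ℝ) * g := aux_sum_meet_le a ha g hsite _
            _ ≤ (((m : ℝ) + 1) * k) * g := mul_le_mul_of_nonneg_right hc hg
            _ = ((m : ℝ) + 1) * (g * k) := by ring
            _ ≤ ((m : ℝ) + 1) * G := by
                apply mul_le_mul_of_nonneg_left hGk (by positivity)
        · rw [if_neg hp, zero_mul, zero_mul]
      calc ∑ p : Fin (m + 1) → Finset Λ,
          (if ((∀ j, (p j).Nonempty ∧ (p j).card ≤ k) ∧ SeqConnected p ∧ x ∈ p 0 ∧
              y ∈ Finset.univ.biUnion p) then ∏ j, a (p j) else 0)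
            * (∑ Z : Finset Λ, if (Z ∩ Finset.univ.biUnion p).Nonempty then a Z else 0)
          ≤ ∑ p : Fin (m + 1) → Finset Λ,
            (if ((∀ j, (p j).Nonempty ∧ (p j).card ≤ k) ∧ SeqConnected p ∧ x ∈ p 0 ∧
                y ∈ Finset.univ.biUnion p) then ∏ j, a (p j) else 0) * (((m : ℝ) + 1) * G) :=
            Finset.sum_le_sum fun p _ => h1 p
        _ = (∑ p : Fin (m + 1) → Finset Λ,
            (if ((∀ j, (p j).Nonempty ∧ (p j).card ≤ k) ∧ SeqConnected p ∧ x ∈ p 0 ∧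
                y ∈ Finset.univ.biUnion p) then ∏ j, a (p j) else 0)) * (((m : ℝ) + 1) * G) :=
            (Finset.sum_mul _ _ _).symm
        _ = strS a k m x y * (((m : ℝ) + 1) * G) := by
            simp only [strS]
            rw [Finset.sum_filter]
    -- part B bound
    have hpartB : ∑ p : Fin (m + 1) → Finset Λ,
        (if ((∀ j, (p j).Nonempty ∧ (p j).card ≤ k) ∧ SeqConnected p ∧ x ∈ p 0)
            then ∏ j, a (p j) else 0)
          * (∑ Z : Finset Λ,
              if ((Z ∩ Finset.univ.biUnion p).Nonempty ∧ y ∈ Z) then a Z else 0)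
        ≤ ∑ v : Λ, strS a k m x v * (J * ((d v y : ℝ) + 1) ^ (-α)) := by
      have h1 : ∀ p : Fin (m + 1) → Finset Λ,
          (if ((∀ j, (p j).Nonempty ∧ (p j).card ≤ k) ∧ SeqConnected p ∧ x ∈ p 0)
              then ∏ j, a (p j) else 0)
            * (∑ Z : Finset Λ,
                if ((Z ∩ Finset.univ.biUnion p).Nonempty ∧ y ∈ Z) then a Z else 0)
          ≤ ∑ v : Λ,
              (if (((∀ j, (p j).Nonempty ∧ (p j).card ≤ k) ∧ SeqConnected p ∧ x ∈ p 0) ∧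
                  v ∈ Finset.univ.biUnion p)
                then ∏ j, a (p j) else 0) * (J * ((d v y : ℝ) + 1) ^ (-α)) := by
        intro p
        by_cases hp : ((∀ j, (p j).Nonempty ∧ (p j).card ≤ k) ∧ SeqConnected p ∧ x ∈ p 0)
        · rw [if_pos hp]
          have hb : (∑ Z : Finset Λ,
                if ((Z ∩ Finset.univ.biUnion p).Nonempty ∧ y ∈ Z) then a Z else 0)
              ≤ ∑ v ∈ Finset.univ.biUnion p, J * ((d v y : ℝ) + 1) ^ (-α) := by
            rw [← Finset.sum_filter]
            exact aux_sum_bridge_le d α J a ha hpair _ y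
          calc (∏ j, a (p j)) * (∑ Z : Finset Λ,
                if ((Z ∩ Finset.univ.biUnion p).Nonempty ∧ y ∈ Z) then a Z else 0)
              ≤ (∏ j, a (p j)) * ∑ v ∈ Finset.univ.biUnion p, J * ((d v y : ℝ) + 1) ^ (-α) :=
                mul_le_mul_of_nonneg_left hb (hprodnn p)
            _ = ∑ v ∈ Finset.univ.biUnion p, (∏ j, a (p j)) * (J * ((d v y : ℝ) + 1) ^ (-α)) :=
                Finset.mul_sum _ _ _
            _ = ∑ v : Λ, (if v ∈ Finset.univ.biUnion p
                  then (∏ j, a (p j)) * (J * ((d v y : ℝ) + 1) ^ (-α)) else 0) := by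
                rw [Finset.sum_ite_mem, Finset.univ_inter]
            _ = ∑ v : Λ,
                (if (((∀ j, (p j).Nonempty ∧ (p j).card ≤ k) ∧ SeqConnected p ∧ x ∈ p 0) ∧
                    v ∈ Finset.univ.biUnion p)
                  then ∏ j, a (p j) else 0) * (J * ((d v y : ℝ) + 1) ^ (-α)) := by
                refine Finset.sum_congr rfl fun v _ => ?_
                by_cases hv : v ∈ Finset.univ.biUnion p
                · rw [if_pos hv, if_pos ⟨hp, hv⟩]
                · rw [if_neg hv, if_neg (fun hc => hv hc.2), zero_mul]
        · rw [if_neg hp, zero_mul]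
          apply Finset.sum_nonneg
          intro v _
          exact mul_nonneg (aux_ite_nonneg _ (hprodnn p)) (by positivity)
      calc ∑ p : Fin (m + 1) → Finset Λ,
          (if ((∀ j, (p j).Nonempty ∧ (p j).card ≤ k) ∧ SeqConnected p ∧ x ∈ p 0)
              then ∏ j, a (p j) else 0)
            * (∑ Z : Finset Λ,
                if ((Z ∩ Finset.univ.biUnion p).Nonempty ∧ y ∈ Z) then a Z else 0)
          ≤ ∑ p : Fin (m + 1) → Finset Λ, ∑ v : Λ,
              (if (((∀ j, (p j).Nonempty ∧ (p j).card ≤ k) ∧ SeqConnected p ∧ x ∈ p 0) ∧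
                  v ∈ Finset.univ.biUnion p)
                then ∏ j, a (p j) else 0) * (J * ((d v y : ℝ) + 1) ^ (-α)) :=
            Finset.sum_le_sum fun p _ => h1 p
        _ = ∑ v : Λ, ∑ p : Fin (m + 1) → Finset Λ,
              (if (((∀ j, (p j).Nonempty ∧ (p j).card ≤ k) ∧ SeqConnected p ∧ x ∈ p 0) ∧
                  v ∈ Finset.univ.biUnion p)
                then ∏ j, a (p j) else 0) * (J * ((d v y : ℝ) + 1) ^ (-α)) :=
            Finset.sum_comm
        _ = ∑ v : Λ, strS a k m x v * (J * ((d v y : ℝ) + 1) ^ (-α)) := by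
            refine Finset.sum_congr rfl fun v _ => ?_
            rw [← Finset.sum_mul]
            congr 1
            simp only [strS]
            rw [Finset.sum_filter]
            refine Finset.sum_congr rfl fun p _ => ?_
            exact if_congr (by tauto) rfl rfl
    -- combine
    have hB2 : ∑ v : Λ, strS a k m x v * (J * ((d v y : ℝ) + 1) ^ (-α))
        ≤ ((m + 1).factorial : ℝ) * G ^ m * J * (G * X) := by
      calc ∑ v : Λ, strS a k m x v * (J * ((d v y : ℝ) + 1) ^ (-α))
          ≤ ∑ v : Λ, (((m + 1).factorial : ℝ) * G ^ m * J * ((d x v : ℝ) + 1) ^ (-α))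
              * (J * ((d v y : ℝ) + 1) ^ (-α)) := by
            refine Finset.sum_le_sum fun v _ => ?_
            exact mul_le_mul_of_nonneg_right (ih x v) (by positivity)
        _ = (((m + 1).factorial : ℝ) * G ^ m * J * J) *
              ∑ v : Λ, ((d x v : ℝ) + 1) ^ (-α) * ((d v y : ℝ) + 1) ^ (-α) := by
            rw [Finset.mul_sum]
            exact Finset.sum_congr rfl fun v _ => by ring
        _ ≤ (((m + 1).factorial : ℝ) * G ^ m * J * J) * (lam * ((d x y : ℝ) + 1) ^ (-α)) := by
            apply mul_le_mul_of_nonneg_left (hlam₂ x y) (by positivity)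
        _ = ((m + 1).factorial : ℝ) * G ^ m * J * ((lam * J) * X) := by rw [hXdef]; ring
        _ ≤ ((m + 1).factorial : ℝ) * G ^ m * J * (G * X) := by
            apply mul_le_mul_of_nonneg_left (mul_le_mul_of_nonneg_right hGJ hXnn)
              (by positivity)
    have hA2 : strS a k m x y * (((m : ℝ) + 1) * G)
        ≤ (((m + 1).factorial : ℝ) * G ^ m * J * X) * (((m : ℝ) + 1) * G) := by
      apply mul_le_mul_of_nonneg_right (ih x y) (by positivity)
    calc strS a k (m + 1) x y
        ≤ strS a k m x y * (((m : ℝ) + 1) * G)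
            + ∑ v : Λ, strS a k m x v * (J * ((d v y : ℝ) + 1) ^ (-α)) := by
          rw [hstep1]
          calc ∑ p : Fin (m + 1) → Finset Λ, ∑ Z : Finset Λ, _
              ≤ ∑ p : Fin (m + 1) → Finset Λ, ((if ((∀ j, (p j).Nonempty ∧ (p j).card ≤ k) ∧
                  SeqConnected p ∧ x ∈ p 0 ∧ y ∈ Finset.univ.biUnion p)
                    then ∏ j, a (p j) else 0)
                  * (∑ Z : Finset Λ, if (Z ∩ Finset.univ.biUnion p).Nonempty then a Z else 0)
                + (if ((∀ j, (p j).Nonempty ∧ (p j).card ≤ k) ∧ SeqConnected p ∧ x ∈ p 0)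
                    then ∏ j, a (p j) else 0)
                  * (∑ Z : Finset Λ,
                      if ((Z ∩ Finset.univ.biUnion p).Nonempty ∧ y ∈ Z) then a Z else 0)) := by
                refine Finset.sum_le_sum fun p _ => ?_
                rw [Finset.mul_sum, Finset.mul_sum, ← Finset.sum_add_distrib]
                exact Finset.sum_le_sum fun Z _ => hkey p Z
            _ = (∑ p : Fin (m + 1) → Finset Λ,
                  (if ((∀ j, (p j).Nonempty ∧ (p j).card ≤ k) ∧
                      SeqConnected p ∧ x ∈ p 0 ∧ y ∈ Finset.univ.biUnion p)
                    then ∏ j, a (p j) else 0)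
                  * (∑ Z : Finset Λ, if (Z ∩ Finset.univ.biUnion p).Nonempty then a Z else 0))
                + ∑ p : Fin (m + 1) → Finset Λ,
                  (if ((∀ j, (p j).Nonempty ∧ (p j).card ≤ k) ∧ SeqConnected p ∧ x ∈ p 0)
                    then ∏ j, a (p j) else 0)
                  * (∑ Z : Finset Λ,
                      if ((Z ∩ Finset.univ.biUnion p).Nonempty ∧ y ∈ Z) then a Z else 0) :=
                Finset.sum_add_distrib
            _ ≤ strS a k m x y * (((m : ℝ) + 1) * G)
                + ∑ v : Λ, strS a k m x v * (J * ((d v y : ℝ) + 1) ^ (-α)) :=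
                add_le_add hpartA hpartB
      _ ≤ (((m + 1).factorial : ℝ) * G ^ m * J * X) * (((m : ℝ) + 1) * G)
            + ((m + 1).factorial : ℝ) * G ^ m * J * (G * X) := add_le_add hA2 hB2
      _ = ((m + 1 + 1).factorial : ℝ) * G ^ (m + 1) * J * X := by
          rw [Nat.factorial_succ (m + 1)]
          push_cast
          ring

end AnchoredMain

/-- **Anchored string-sum bound with minimal-distance weight:**
the sum over connected sequences with `Z₀ ∋ i₁`, weighted by
`(min_{i'∈Z₀∪⋯∪Z_{m₁}} d(i,i') + 1)^{-α}`, is bounded by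
`c₂ m₁! (m₁+1)² g̃^{m₁+1} (d(i,i₁)+1)^{-α}` with `c₂ = 2^α (2 + γ/(α-D))`. -/
theorem anchored_string_sum_bound
    {Λ : Type} [Fintype Λ] [DecidableEq Λ] (d : Λ → Λ → ℕ)
    (hmet : IsLatticeMetric d) (k : ℕ) (α D : ℝ) (hD : 0 < D) (hα : D < α)
    (J g lam γ : ℝ) (hJ : 0 < J) (hg : 0 ≤ g) (hlam : 1 ≤ lam) (hγ : 1 ≤ γ)
    (hgrow : ∀ (i : Λ) (s : ℕ), 1 ≤ s →
      ((Finset.univ.filter (fun i' : Λ => d i i' = s)).card : ℝ) ≤ γ * (s : ℝ) ^ (D - 1))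
    (a : Finset Λ → ℝ) (ha : ∀ Z, 0 ≤ a Z)
    (hpair : ∀ i i' : Λ,
      ∑ Z ∈ Finset.univ.filter (fun Z : Finset Λ => i ∈ Z ∧ i' ∈ Z), a Z
        ≤ J * ((d i i' : ℝ) + 1) ^ (-α))
    (hsite : ∀ i : Λ,
      ∑ Z ∈ Finset.univ.filter (fun Z : Finset Λ => i ∈ Z), a Z ≤ g)
    (hlam₂ : ∀ i i' : Λ,
      ∑ i₀ : Λ, ((d i i₀ : ℝ) + 1) ^ (-α) * ((d i₀ i' : ℝ) + 1) ^ (-α)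
        ≤ lam * ((d i i' : ℝ) + 1) ^ (-α))
    (m₁ : ℕ) (i i₁ : Λ) :
    ∑ w ∈ Finset.univ.filter (fun w : Fin (m₁ + 1) → Finset Λ =>
        (∀ j, (w j).Nonempty ∧ (w j).card ≤ k) ∧ SeqConnected w ∧ i₁ ∈ w 0),
      (∏ j, a (w j)) /
        ((distSet d i (Finset.univ.biUnion w) : ℝ) + 1) ^ α
      ≤ (2 : ℝ) ^ α * (2 + γ / (α - D)) * (m₁.factorial : ℝ) * ((m₁ : ℝ) + 1) ^ 2 *
          max (g * k) (lam * J) ^ (m₁ + 1) * ((d i i₁ : ℝ) + 1) ^ (-α) := by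
  classical
  have hα0 : 0 < α := hD.trans hα
  have hGJ : lam * J ≤ max (g * (k : ℝ)) (lam * J) := le_max_right _ _
  have hG0 : 0 < max (g * (k : ℝ)) (lam * J) := lt_of_lt_of_le (by nlinarith) hGJ
  have hd0 : ∀ u v : Λ, (0 : ℝ) ≤ ((d u v : ℝ) + 1) ^ (-α) := fun u v =>
    Real.rpow_nonneg (by positivity) _
  have hprodnn : ∀ (w : Fin (m₁ + 1) → Finset Λ), 0 ≤ ∏ j, a (w j) :=
    fun w => Finset.prod_nonneg fun j _ => ha (w j)
  have hstr := strS_le d k α J g lam hJ hg hlam a ha hpair hsite hlam₂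
  have hXnn : 0 ≤ ((d i i₁ : ℝ) + 1) ^ (-α) := hd0 i i₁
  have hper : ∀ w ∈ Finset.univ.filter (fun w : Fin (m₁ + 1) → Finset Λ =>
      (∀ j, (w j).Nonempty ∧ (w j).card ≤ k) ∧ SeqConnected w ∧ i₁ ∈ w 0),
      (∏ j, a (w j)) / ((distSet d i (Finset.univ.biUnion w) : ℝ) + 1) ^ α
        ≤ ∑ v ∈ Finset.univ.biUnion w, (∏ j, a (w j)) * ((d i v : ℝ) + 1) ^ (-α) := by
    intro w hw
    simp only [Finset.mem_filter, Finset.mem_univ, true_and] at hw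
    obtain ⟨hval, hconn, hx0⟩ := hw
    have hUne : i₁ ∈ Finset.univ.biUnion w := Finset.mem_biUnion.2 ⟨0, Finset.mem_univ _, hx0⟩
    have hTne : {n : ℕ | ∃ j ∈ Finset.univ.biUnion w, d i j = n}.Nonempty :=
      ⟨d i i₁, i₁, hUne, rfl⟩
    obtain ⟨v, hv, hdv⟩ := Nat.sInf_mem hTne
    have hds : distSet d i (Finset.univ.biUnion w) = d i v := hdv.symm
    have h1 : (∏ j, a (w j)) / ((distSet d i (Finset.univ.biUnion w) : ℝ) + 1) ^ α
        = (∏ j, a (w j)) * ((d i v : ℝ) + 1) ^ (-α) := by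
      rw [hds, Real.rpow_neg (by positivity), div_eq_mul_inv]
    rw [h1]
    exact Finset.single_le_sum
      (f := fun v' => (∏ j, a (w j)) * ((d i v' : ℝ) + 1) ^ (-α))
      (fun v' _ => mul_nonneg (hprodnn w) (hd0 i v')) hv
  have hFnn : (0 : ℝ) ≤ ((m₁ + 1).factorial : ℝ) * max (g * (k : ℝ)) (lam * J) ^ m₁ * J :=
    mul_nonneg (mul_nonneg (Nat.cast_nonneg _) (pow_nonneg hG0.le m₁)) hJ.le
  calc ∑ w ∈ Finset.univ.filter (fun w : Fin (m₁ + 1) → Finset Λ =>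
        (∀ j, (w j).Nonempty ∧ (w j).card ≤ k) ∧ SeqConnected w ∧ i₁ ∈ w 0),
      (∏ j, a (w j)) / ((distSet d i (Finset.univ.biUnion w) : ℝ) + 1) ^ α
      ≤ ∑ w ∈ Finset.univ.filter (fun w : Fin (m₁ + 1) → Finset Λ =>
          (∀ j, (w j).Nonempty ∧ (w j).card ≤ k) ∧ SeqConnected w ∧ i₁ ∈ w 0),
        ∑ v ∈ Finset.univ.biUnion w, (∏ j, a (w j)) * ((d i v : ℝ) + 1) ^ (-α) :=
      Finset.sum_le_sum hper
    _ = ∑ w ∈ Finset.univ.filter (fun w : Fin (m₁ + 1) → Finset Λ =>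
          (∀ j, (w j).Nonempty ∧ (w j).card ≤ k) ∧ SeqConnected w ∧ i₁ ∈ w 0),
        ∑ v : Λ, (if v ∈ Finset.univ.biUnion w
            then (∏ j, a (w j)) * ((d i v : ℝ) + 1) ^ (-α) else 0) := by
      refine Finset.sum_congr rfl fun w _ => ?_
      rw [Finset.sum_ite_mem, Finset.univ_inter]
    _ = ∑ v : Λ, ∑ w ∈ Finset.univ.filter (fun w : Fin (m₁ + 1) → Finset Λ =>
          (∀ j, (w j).Nonempty ∧ (w j).card ≤ k) ∧ SeqConnected w ∧ i₁ ∈ w 0),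
        (if v ∈ Finset.univ.biUnion w
            then (∏ j, a (w j)) * ((d i v : ℝ) + 1) ^ (-α) else 0) := Finset.sum_comm
    _ = ∑ v : Λ, strS a k m₁ i₁ v * ((d i v : ℝ) + 1) ^ (-α) := by
      refine Finset.sum_congr rfl fun v _ => ?_
      have hsplit : ∀ w : Fin (m₁ + 1) → Finset Λ,
          (if v ∈ Finset.univ.biUnion w
            then (∏ j, a (w j)) * ((d i v : ℝ) + 1) ^ (-α) else 0)
          = (if v ∈ Finset.univ.biUnion w then (∏ j, a (w j)) else 0)
              * ((d i v : ℝ) + 1) ^ (-α) := by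
        intro w; split_ifs <;> simp
      rw [Finset.sum_congr rfl fun w _ => hsplit w, ← Finset.sum_mul]
      congr 1
      rw [← Finset.sum_filter, Finset.filter_filter]
      simp only [strS]
      exact Finset.sum_congr (Finset.filter_congr fun w _ => by tauto) fun w _ => rfl
    _ ≤ ∑ v : Λ, (((m₁ + 1).factorial : ℝ) * max (g * (k : ℝ)) (lam * J) ^ m₁ * J
          * ((d i₁ v : ℝ) + 1) ^ (-α)) * ((d i v : ℝ) + 1) ^ (-α) :=
      Finset.sum_le_sum fun v _ =>
        mul_le_mul_of_nonneg_right (hstr m₁ i₁ v) (hd0 i v)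
    _ = (((m₁ + 1).factorial : ℝ) * max (g * (k : ℝ)) (lam * J) ^ m₁ * J)
          * ∑ v : Λ, ((d i v : ℝ) + 1) ^ (-α) * ((d v i₁ : ℝ) + 1) ^ (-α) := by
      rw [Finset.mul_sum]
      refine Finset.sum_congr rfl fun v _ => ?_
      rw [hmet.1 i₁ v]
      ring
    _ ≤ (((m₁ + 1).factorial : ℝ) * max (g * (k : ℝ)) (lam * J) ^ m₁ * J)
          * (lam * ((d i i₁ : ℝ) + 1) ^ (-α)) :=
      mul_le_mul_of_nonneg_left (hlam₂ i i₁) hFnn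
    _ = ((m₁ + 1).factorial : ℝ) * max (g * (k : ℝ)) (lam * J) ^ m₁ * (lam * J)
          * ((d i i₁ : ℝ) + 1) ^ (-α) := by ring
    _ ≤ ((m₁ + 1).factorial : ℝ) * max (g * (k : ℝ)) (lam * J) ^ m₁
          * max (g * (k : ℝ)) (lam * J) * ((d i i₁ : ℝ) + 1) ^ (-α) :=
      mul_le_mul_of_nonneg_right
        (mul_le_mul_of_nonneg_left hGJ
          (mul_nonneg (Nat.cast_nonneg _) (pow_nonneg hG0.le m₁))) hXnn
    _ ≤ (2 : ℝ) ^ α * (2 + γ / (α - D)) * (m₁.factorial : ℝ) * ((m₁ : ℝ) + 1) ^ 2 *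
          max (g * k) (lam * J) ^ (m₁ + 1) * ((d i i₁ : ℝ) + 1) ^ (-α) := by
      have h2a : (1 : ℝ) ≤ (2 : ℝ) ^ α := by
        rw [show (1 : ℝ) = (2 : ℝ) ^ (0 : ℝ) from (Real.rpow_zero 2).symm]
        exact Real.rpow_le_rpow_of_exponent_le (by norm_num) hα0.le
      have h2b : (1 : ℝ) ≤ 2 + γ / (α - D) := by
        have hdiv : 0 ≤ γ / (α - D) := div_nonneg (by linarith) (by linarith)
        linarith
      have hc2 : (1 : ℝ) ≤ (2 : ℝ) ^ α * (2 + γ / (α - D)) := by nlinarith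
      have hfac : ((m₁ + 1).factorial : ℝ) = (m₁.factorial : ℝ) * ((m₁ : ℝ) + 1) := by
        rw [Nat.factorial_succ]; push_cast; ring
      have hM1 : (1 : ℝ) ≤ (m₁ : ℝ) + 1 := by
        have : (0:ℝ) ≤ (m₁ : ℝ) := Nat.cast_nonneg _
        linarith
      have hfacnn : (0 : ℝ) ≤ (m₁.factorial : ℝ) := Nat.cast_nonneg _
      have hY : (0 : ℝ) ≤ max (g * (k : ℝ)) (lam * J) ^ (m₁ + 1) * ((d i i₁ : ℝ) + 1) ^ (-α) :=
        mul_nonneg (pow_nonneg hG0.le _) hXnn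
      have h2 : (m₁.factorial : ℝ) * ((m₁ : ℝ) + 1)
          ≤ (m₁.factorial : ℝ) * ((m₁ : ℝ) + 1) ^ 2 := by nlinarith
      calc ((m₁ + 1).factorial : ℝ) * max (g * (k : ℝ)) (lam * J) ^ m₁
            * max (g * (k : ℝ)) (lam * J) * ((d i i₁ : ℝ) + 1) ^ (-α)
          = ((m₁.factorial : ℝ) * ((m₁ : ℝ) + 1))
              * (max (g * (k : ℝ)) (lam * J) ^ (m₁ + 1) * ((d i i₁ : ℝ) + 1) ^ (-α)) := by
            rw [hfac, pow_succ]; ring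
        _ ≤ ((m₁.factorial : ℝ) * ((m₁ : ℝ) + 1) ^ 2)
              * (max (g * (k : ℝ)) (lam * J) ^ (m₁ + 1) * ((d i i₁ : ℝ) + 1) ^ (-α)) :=
            mul_le_mul_of_nonneg_right h2 hY
        _ ≤ ((2 : ℝ) ^ α * (2 + γ / (α - D)))
              * (((m₁.factorial : ℝ) * ((m₁ : ℝ) + 1) ^ 2)
                * (max (g * (k : ℝ)) (lam * J) ^ (m₁ + 1) * ((d i i₁ : ℝ) + 1) ^ (-α))) := by
            refine le_mul_of_one_le_left ?_ hc2
            exact mul_nonneg (mul_nonneg hfacnn (by positivity)) hY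
        _ = (2 : ℝ) ^ α * (2 + γ / (α - D)) * (m₁.factorial : ℝ) * ((m₁ : ℝ) + 1) ^ 2 *
              max (g * k) (lam * J) ^ (m₁ + 1) * ((d i i₁ : ℝ) + 1) ^ (-α) := by ring
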